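/- For all integers k and n with 2 ≤ k ≤ n, S(n,k) < (1 − (1 − 1/k)^n)^k. -/

import Mathlib

open Finset

/-! ### Auxiliary combinatorics:
`hitSet n K s` is the set of functions `Fin n → Fin K` whose range contains all
values `< s`; `avoidSet n K s` additionally avoids the value `s`. -/

def hitSet (n K s : ℕ) : Finset (Fin n → Fin K) :=
  Finset.univ.filter (fun f => ∀ i < s, ∃ t, (f t : ℕ) = i)

def avoidSet (n K s : ℕ) : Finset (Fin n → Fin K) :=
  Finset.univ.filter (fun f => (∀ i < s, ∃ t, (f t : ℕ) = i) ∧ ∀ t, (f t : ℕ) ≠ s)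

lemma card_split (n K s : ℕ) :
    (hitSet n K (s+1)).card + (avoidSet n K s).card = (hitSet n K s).card := by
  classical
  have h1 : hitSet n K (s+1) = (hitSet n K s).filter (fun f => ∃ t, (f t : ℕ) = s) := by
    ext f
    simp only [hitSet, Finset.mem_filter, Finset.mem_univ, true_and]
    constructor
    · intro h; exact ⟨fun i hi => h i (hi.trans (Nat.lt_succ_self s)), h s (Nat.lt_succ_self s)⟩
    · rintro ⟨h1, h2⟩ i hi
      rcases Nat.lt_succ_iff_lt_or_eq.mp hi with h | rfl
      · exact h1 i h
      · exact h2
  have h2 : avoidSet n K s = (hitSet n K s).filter (fun f => ¬ ∃ t, (f t : ℕ) = s) := by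
    ext f
    simp only [hitSet, avoidSet, Finset.mem_filter, Finset.mem_univ, true_and, not_exists]
  rw [h1, h2, Finset.card_filter_add_card_filter_not]

lemma succAbove_val (K s : ℕ) (hs : s ≤ K) (x : Fin K) :
    (((⟨s, Nat.lt_succ_of_le hs⟩ : Fin (K+1)).succAbove x : ℕ)) =
      if (x:ℕ) < s then (x:ℕ) else (x:ℕ)+1 := by
  rw [Fin.succAbove]
  split_ifs with h h2 h3
  · simp
  · exact absurd (by simpa [Fin.lt_def] using h) h2
  · exact absurd (by simpa [Fin.lt_def] using h3) h
  · simp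

lemma succAbove_ne_s (K s : ℕ) (hs : s ≤ K) (x : Fin K) :
    (((⟨s, Nat.lt_succ_of_le hs⟩ : Fin (K+1)).succAbove x : ℕ)) ≠ s := by
  rw [succAbove_val K s hs]; split_ifs with h <;> omega

lemma succAbove_eq_iff (K s : ℕ) (hs : s ≤ K) (x : Fin K) (i : ℕ) (hi : i < s) :
    (((⟨s, Nat.lt_succ_of_le hs⟩ : Fin (K+1)).succAbove x : ℕ)) = i ↔ (x : ℕ) = i := by
  rw [succAbove_val K s hs]; split_ifs with h <;> omega

lemma card_avoid (n K s : ℕ) (hs : s ≤ K) :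
    (avoidSet n (K+1) s).card = (hitSet n K s).card := by
  classical
  set p : Fin (K+1) := ⟨s, Nat.lt_succ_of_le hs⟩ with hp
  symm
  apply Finset.card_bij (fun g _ => fun t => p.succAbove (g t))
  · intro g hg
    simp only [hitSet, avoidSet, Finset.mem_filter, Finset.mem_univ, true_and] at hg ⊢
    refine ⟨fun i hi => ?_, fun t => succAbove_ne_s K s hs (g t)⟩
    obtain ⟨t, ht⟩ := hg i hi
    exact ⟨t, (succAbove_eq_iff K s hs (g t) i hi).mpr ht⟩
  · intro g1 _ g2 _ h
    funext t
    exact Fin.succAbove_right_injective (p := p) (congrFun h t)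
  · intro g hg
    simp only [avoidSet, Finset.mem_filter, Finset.mem_univ, true_and] at hg
    have hne : ∀ t, g t ≠ p := by
      intro t h; exact hg.2 t (by rw [h])
    choose f hf using fun t => Fin.exists_succAbove_eq (hne t)
    refine ⟨f, ?_, by funext t; rw [hf t]⟩
    simp only [hitSet, Finset.mem_filter, Finset.mem_univ, true_and]
    intro i hi
    obtain ⟨t, ht⟩ := hg.1 i hi
    refine ⟨t, (succAbove_eq_iff K s hs (f t) i hi).mp (by rw [hf t]; exact ht)⟩

/-- The key strict correlation inequality, by an injection between products. -/
lemma key_lt (n K s : ℕ) (hs1 : 1 ≤ s) (hsK : s ≤ K) (hsn : s ≤ n) :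
    K ^ n * (hitSet n (K+1) s).card < (K+1) ^ n * (avoidSet n (K+1) s).card := by
  classical
  set p : Fin (K+1) := ⟨s, Nat.lt_succ_of_le hsK⟩ with hp
  set P : Finset ((Fin n → Fin (K+1)) × (Fin n → Fin K)) :=
    (hitSet n (K+1) s) ×ˢ Finset.univ with hP
  set Q : Finset ((Fin n → Fin (K+1)) × (Fin n → Fin (K+1))) :=
    (avoidSet n (K+1) s) ×ˢ Finset.univ with hQ
  set Φ : ((Fin n → Fin (K+1)) × (Fin n → Fin K)) →
      ((Fin n → Fin (K+1)) × (Fin n → Fin (K+1))) :=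
    fun fg => (fun t => if fg.1 t = p then p.succAbove (fg.2 t) else fg.1 t,
               fun t => if fg.1 t = p then p else p.succAbove (fg.2 t)) with hΦ
  set f₀ : Fin n → Fin (K+1) :=
    fun t => if h : (t:ℕ) < s then ⟨(t:ℕ), by omega⟩ else ⟨0, by omega⟩ with hf₀
  set w : (Fin n → Fin (K+1)) × (Fin n → Fin (K+1)) := (f₀, fun _ => p) with hw
  have hwQ : w ∈ Q := by
    simp only [hQ, Finset.mem_product, Finset.mem_univ, and_true]
    simp only [avoidSet, Finset.mem_filter, Finset.mem_univ, true_and]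
    constructor
    · intro i hi
      refine ⟨⟨i, lt_of_lt_of_le hi hsn⟩, ?_⟩
      simp [hw, hf₀, hi]
    · intro t
      simp only [hw, hf₀]
      split_ifs with h <;> simp <;> omega
  have hmaps : ∀ a ∈ P, Φ a ∈ Q.erase w := by
    rintro ⟨f, g⟩ haP
    simp only [hP, Finset.mem_product, Finset.mem_univ, and_true] at haP
    simp only [hitSet, Finset.mem_filter, Finset.mem_univ, true_and] at haP
    rw [Finset.mem_erase]
    constructor
    · intro heq
      have h2 := congrArg Prod.snd heq
      have hall : ∀ t, f t = p := by
        intro t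
        by_contra hft
        have := congrFun h2 t
        simp only [hΦ, hw, if_neg hft] at this
        exact Fin.succAbove_ne p (g t) this
      obtain ⟨t, ht⟩ := haP 0 hs1
      rw [hall t] at ht
      simp only [hp] at ht
      omega
    · simp only [hQ, Finset.mem_product, Finset.mem_univ, and_true]
      simp only [avoidSet, Finset.mem_filter, Finset.mem_univ, true_and]
      constructor
      · intro i hi
        obtain ⟨t, ht⟩ := haP i hi
        have hfp : f t ≠ p := by
          intro h; rw [h] at ht; simp only [hp] at ht; omega
        exact ⟨t, by simp only [hΦ, if_neg hfp]; exact ht⟩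
      · intro t
        by_cases h : f t = p
        · simpa only [hΦ, if_pos h] using succAbove_ne_s K s hsK (g t)
        · simp only [hΦ, if_neg h]
          intro hv; exact h (Fin.ext hv)
  have hinj : Set.InjOn Φ P := by
    rintro ⟨f1, g1⟩ _ ⟨f2, g2⟩ _ heq
    have h1 := congrArg Prod.fst heq
    have h2 := congrArg Prod.snd heq
    simp only [hΦ] at h1 h2
    have hf : f1 = f2 := by
      funext t
      have e1 := congrFun h1 t
      have e2 := congrFun h2 t
      by_cases c1 : f1 t = p <;> by_cases c2 : f2 t = p
      · rw [c1, c2]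
      · simp only [if_pos c1, if_neg c2] at e2
        exact absurd e2.symm (Fin.succAbove_ne p (g2 t))
      · simp only [if_neg c1, if_pos c2] at e2
        exact absurd e2 (Fin.succAbove_ne p (g1 t))
      · simpa only [if_neg c1, if_neg c2] using e1
    have hg : g1 = g2 := by
      funext t
      have e1 := congrFun h1 t
      have e2 := congrFun h2 t
      by_cases c1 : f1 t = p
      · have c2 : f2 t = p := by rw [← hf]; exact c1
        simp only [if_pos c1, if_pos c2] at e1
        exact Fin.succAbove_right_injective (p := p) e1
      · have c2 : f2 t ≠ p := by rw [← hf]; exact c1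
        simp only [if_neg c1, if_neg c2] at e2
        exact Fin.succAbove_right_injective (p := p) e2
    rw [hf, hg]
  have hle : P.card ≤ (Q.erase w).card :=
    Finset.card_le_card_of_injOn Φ hmaps hinj
  have hQcard : (Q.erase w).card = Q.card - 1 := Finset.card_erase_of_mem hwQ
  have hQpos : 0 < Q.card := Finset.card_pos.mpr ⟨w, hwQ⟩
  have hPQ : P.card < Q.card := by omega
  have hPc : P.card = (hitSet n (K+1) s).card * K ^ n := by
    simp [hP, Finset.card_univ]
  have hQc : Q.card = (avoidSet n (K+1) s).card * (K+1) ^ n := by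
    simp [hQ, Finset.card_univ]
  rw [hPc, hQc] at hPQ
  rw [mul_comm (K ^ n), mul_comm ((K+1) ^ n)]
  exact hPQ

/-! ### The algebraic side -/

noncomputable def asum (n : ℕ) (x : ℝ) (s : ℕ) : ℝ :=
  ∑ j ∈ Finset.range (s + 1), (s.choose j : ℝ) * (-1) ^ j * (x - (j : ℝ)) ^ n

lemma asum_zero (n : ℕ) (x : ℝ) : asum n x 0 = x ^ n := by
  simp [asum]

lemma asum_one (n : ℕ) (x : ℝ) : asum n x 1 = x ^ n - (x - 1) ^ n := by
  simp [asum, Finset.sum_range_succ]; ring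

lemma asum_pascal (n s : ℕ) (x : ℝ) :
    asum n x (s + 1) = asum n x s - asum n (x - 1) s := by
  unfold asum
  rw [Finset.sum_range_succ']
  have step : ∀ j ∈ Finset.range (s + 1),
      ((s + 1).choose (j + 1) : ℝ) * (-1) ^ (j + 1) * (x - ((j : ℝ) + 1)) ^ n
        = ((s.choose (j + 1) : ℝ) * (-1) ^ (j + 1) * (x - ((j : ℝ) + 1)) ^ n)
          - (s.choose j : ℝ) * (-1) ^ j * ((x - 1) - (j : ℝ)) ^ n := by
    intro j _
    rw [Nat.choose_succ_succ]
    push_cast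
    have h1 : x - ((j : ℝ) + 1) = (x - 1) - (j : ℝ) := by ring
    rw [h1]
    ring
  have hcast : ∀ j : ℕ, ((j + 1 : ℕ) : ℝ) = (j : ℝ) + 1 := by intro j; push_cast; ring
  simp only [hcast]
  rw [Finset.sum_congr rfl step, Finset.sum_sub_distrib]
  have h2 : ∑ j ∈ Finset.range (s + 1),
      (s.choose (j + 1) : ℝ) * (-1) ^ (j + 1) * (x - ((j : ℝ) + 1)) ^ n
      = (∑ j ∈ Finset.range (s + 1), (s.choose j : ℝ) * (-1) ^ j * (x - (j : ℝ)) ^ n)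
        + (s.choose (s + 1) : ℝ) * (-1) ^ (s + 1) * (x - ((s : ℝ) + 1)) ^ n
        - (s.choose 0 : ℝ) * (-1) ^ 0 * (x - (0 : ℝ)) ^ n := by
    have h3 := Finset.sum_range_succ'
      (fun j => (s.choose j : ℝ) * (-1) ^ j * (x - (j : ℝ)) ^ n) (s + 1)
    have h4 := Finset.sum_range_succ
      (fun j => (s.choose j : ℝ) * (-1) ^ j * (x - (j : ℝ)) ^ n) (s + 1)
    simp only [hcast, Nat.cast_zero] at h3 h4 ⊢
    linarith [h3, h4]
  rw [h2]
  simp only [Nat.choose_succ_self, Nat.choose_zero_right, Nat.cast_zero, Nat.cast_one]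
  ring

lemma hit_card_eq (n : ℕ) : ∀ s K : ℕ, s ≤ K → ((hitSet n K s).card : ℝ) = asum n (K : ℝ) s := by
  intro s
  induction s with
  | zero =>
    intro K _
    rw [asum_zero]
    have h : hitSet n K 0 = Finset.univ := by
      simp [hitSet]
    rw [h, Finset.card_univ]
    simp
  | succ s ih =>
    intro K hsK
    obtain ⟨K', rfl⟩ : ∃ K', K = K' + 1 := ⟨K - 1, by omega⟩
    have h1 := card_split n (K' + 1) s
    have h2 := card_avoid n K' s (by omega)
    have h3 := ih (K' + 1) (by omega)
    have h4 := ih K' (by omega)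
    have hx : ((K' + 1 : ℕ) : ℝ) - 1 = (K' : ℝ) := by push_cast; ring
    rw [asum_pascal, hx, ← h3, ← h4]
    rw [h2] at h1
    have h5 : ((hitSet n (K'+1) (s+1)).card : ℝ) + ((hitSet n K' s).card : ℝ)
        = ((hitSet n (K'+1) s).card : ℝ) := by exact_mod_cast congrArg (Nat.cast : ℕ → ℝ) h1
    linarith

/-- `S(n,k) = Stirling(n,k)·k!/kⁿ`, written via the sieve formula. -/
noncomputable def Snk (n k : ℕ) : ℝ :=
  ∑ j ∈ Finset.range (k + 1), (k.choose j : ℝ) * (-1) ^ j * (1 - (j : ℝ) / k) ^ n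

lemma Snk_eq (n k : ℕ) (hk : 0 < k) : Snk n k = asum n (k : ℝ) k / (k : ℝ) ^ n := by
  have hk0 : (k : ℝ) ≠ 0 := by positivity
  unfold Snk asum
  rw [Finset.sum_div]
  refine Finset.sum_congr rfl fun j _ => ?_
  have h : (1 : ℝ) - (j : ℝ) / (k : ℝ) = ((k : ℝ) - j) / (k : ℝ) := by field_simp
  rw [h, div_pow]
  ring

/-- Bernstein's inequality: for `2 ≤ k ≤ n`, `S(n,k) < (1 − (1 − 1/k)ⁿ)^k`. -/
theorem Snk_lt_pow (n k : ℕ) (hk : 2 ≤ k) (hkn : k ≤ n) :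
    Snk n k < (1 - (1 - 1 / (k : ℝ)) ^ n) ^ k := by
  obtain ⟨K, rfl⟩ : ∃ K, k = K + 1 := ⟨k - 1, by omega⟩
  have hK1 : 1 ≤ K := by omega
  have hHc : ((K + 1 : ℕ) : ℝ) = (K : ℝ) + 1 := by push_cast; ring
  have hH0 : (0 : ℝ) < (K : ℝ) + 1 := by positivity
  have hHn0 : (0 : ℝ) < ((K : ℝ) + 1) ^ n := by positivity
  set r : ℝ := 1 - ((K : ℝ) / ((K : ℝ) + 1)) ^ n with hr
  have hfrac : (1 : ℝ) - 1 / ((K + 1 : ℕ) : ℝ) = (K : ℝ) / ((K : ℝ) + 1) := by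
    rw [hHc]; field_simp; ring
  have hfrac01 : (0 : ℝ) ≤ (K : ℝ) / ((K : ℝ) + 1) ∧ (K : ℝ) / ((K : ℝ) + 1) ≤ 1 := by
    constructor
    · positivity
    · rw [div_le_one hH0]; linarith
  have hr0 : 0 ≤ r := by
    rw [hr]
    have := pow_le_one₀ hfrac01.1 hfrac01.2 (n := n)
    linarith
  have hKn : ((K : ℝ) / ((K : ℝ) + 1)) ^ n = (K : ℝ) ^ n / ((K : ℝ) + 1) ^ n := div_pow _ _ n
  -- the chain of inequalities
  have chain : ∀ m, 1 ≤ m → m ≤ K + 1 →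
      ((hitSet n (K + 1) m).card : ℝ) ≤ ((K : ℝ) + 1) ^ n * r ^ m ∧
      (2 ≤ m → ((hitSet n (K + 1) m).card : ℝ) < ((K : ℝ) + 1) ^ n * r ^ m) := by
    intro m
    induction m with
    | zero => intro h; exact absurd h (by omega)
    | succ m ih =>
      intro _ hmK
      by_cases hm0 : m = 0
      · subst hm0
        have he : ((hitSet n (K + 1) 1).card : ℝ) = ((K : ℝ) + 1) ^ n - (K : ℝ) ^ n := by
          rw [hit_card_eq n 1 (K + 1) (by omega), asum_one, hHc]
          ring_nf
        have hcan : ((K : ℝ) + 1) ^ n * ((K : ℝ) ^ n / ((K : ℝ) + 1) ^ n) = (K : ℝ) ^ n := by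
          field_simp
        have he2 : ((K : ℝ) + 1) ^ n * r ^ 1 = ((K : ℝ) + 1) ^ n - (K : ℝ) ^ n := by
          rw [pow_one, hr, hKn, mul_sub, mul_one, hcan]
        refine ⟨by rw [he, he2], fun h => absurd h (by omega)⟩
      · have hm1 : 1 ≤ m := by omega
        have ihle := (ih hm1 (by omega)).1
        have hkey := key_lt n K m hm1 (by omega) (by omega)
        have hkeyR : (K : ℝ) ^ n * ((hitSet n (K + 1) m).card : ℝ)
            < ((K : ℝ) + 1) ^ n * ((avoidSet n (K + 1) m).card : ℝ) := by
          exact_mod_cast hkey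
        have hsplitR : ((hitSet n (K + 1) (m + 1)).card : ℝ)
            + ((avoidSet n (K + 1) m).card : ℝ) = ((hitSet n (K + 1) m).card : ℝ) := by
          exact_mod_cast congrArg (Nat.cast : ℕ → ℝ) (card_split n (K + 1) m)
        set a : ℝ := ((hitSet n (K + 1) m).card : ℝ) with ha
        set b : ℝ := ((avoidSet n (K + 1) m).card : ℝ) with hb
        set c : ℝ := ((hitSet n (K + 1) (m + 1)).card : ℝ) with hc
        have hbgt : (K : ℝ) ^ n / ((K : ℝ) + 1) ^ n * a < b := by
          rw [div_mul_eq_mul_div, div_lt_iff₀ hHn0]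
          linarith [hkeyR]
        have hstep : c < a * r := by
          have hcab : c = a - b := by linarith
          have hexp : a * r = a - (K : ℝ) ^ n / ((K : ℝ) + 1) ^ n * a := by
            rw [hr, hKn]; ring
          rw [hcab, hexp]
          linarith
        have hlt : c < ((K : ℝ) + 1) ^ n * r ^ (m + 1) := by
          calc c < a * r := hstep
            _ ≤ (((K : ℝ) + 1) ^ n * r ^ m) * r := mul_le_mul_of_nonneg_right ihle hr0
            _ = ((K : ℝ) + 1) ^ n * r ^ (m + 1) := by rw [pow_succ]; ring
        exact ⟨le_of_lt hlt, fun _ => hlt⟩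
  have hfin := (chain (K + 1) (by omega) le_rfl).2 (by omega)
  rw [Snk_eq n (K + 1) (by omega), hfrac, ← hr, ← hit_card_eq n (K + 1) (K + 1) le_rfl, hHc,
    div_lt_iff₀ hHn0]
  linarith [hfin]
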